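/- Let w = (w_0, w_1, w_2) ∈ ℝ³ be a fixed vector, let A be the 3×3 real matrix with all off-diagonal entries 1 and diagonal entries 0, and define (d_n)_{n≥0} in ℝ³ by d_0 = (0,0,0) and d_{n+1} = A·d_n + w. Then for all n ≥ 0, d_n = |w|·ℓ_{n−1}·(1,1,1) + c_n·w, where |w| = w_0 + w_1 + w_2, ℓ_n = Σ_{ν=0}^{n} J_ν is the Lichtenberg sequence (with ℓ_{−1} = 0), J_ν = (2^ν − (−1)^ν)/3 is the Jacobsthal sequence, and c_n = n mod 2 is the parity sequence. -/

import Mathlib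

/-- The Jacobsthal numbers as reals: `J n = (2^n - (-1)^n)/3`. -/
noncomputable def jacobsthal (n : ℕ) : ℝ := (2 ^ n - (-1) ^ n) / 3

/-- `lichtenbergPred n = ℓ_{n-1} = ∑_{ν=0}^{n-1} J_ν` (so `lichtenbergPred 0 = ℓ_{-1} = 0`). -/
noncomputable def lichtenbergPred (n : ℕ) : ℝ := ∑ ν ∈ Finset.range n, jacobsthal ν

/-- The 3×3 matrix with off-diagonal entries 1 and diagonal entries 0, over ℝ. -/
def hanoiA : Matrix (Fin 3) (Fin 3) ℝ := !![0,1,1; 1,0,1; 1,1,0]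

lemma par_real (n : ℕ) : ((n % 2 : ℕ) : ℝ) = (1 - (-1) ^ n) / 2 := by
  rcases Nat.even_or_odd n with h | h
  · rw [Nat.even_iff.mp h, h.neg_one_pow]; norm_num
  · rw [Nat.odd_iff.mp h, h.neg_one_pow]; norm_num

lemma lich_closed (n : ℕ) :
    lichtenbergPred n = (2 ^ n - 1) / 3 - (1 - (-1) ^ n) / 6 := by
  induction n with
  | zero => simp [lichtenbergPred]
  | succ n ih =>
    rw [lichtenbergPred, Finset.sum_range_succ, ← lichtenbergPred, ih, jacobsthal]
    simp [pow_succ]; ring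

theorem stmt2 (w : Fin 3 → ℝ) (d : ℕ → Fin 3 → ℝ)
    (h0 : d 0 = ![0, 0, 0])
    (hrec : ∀ n, d (n + 1) = hanoiA.mulVec (d n) + w) :
    ∀ n, d n = ((w 0 + w 1 + w 2) * lichtenbergPred n) • ![(1 : ℝ), 1, 1]
        + ((n % 2 : ℕ) : ℝ) • w := by
  intro n
  induction n with
  | zero =>
    rw [h0]
    funext i
    fin_cases i <;> simp [lichtenbergPred]
  | succ n ih =>
    rw [hrec, ih]
    funext i
    fin_cases i <;>
      simp [hanoiA, Matrix.mulVec, dotProduct, lich_closed, par_real,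
        pow_succ, Matrix.cons_val_zero, Matrix.cons_val_one, Matrix.vecHead,
        Matrix.vecTail, Function.comp] <;> ring
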